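/- Let v1, v2, v3 be integers with v1+v2+v3 = 0, v1·v2·v3 ≠ 0 and gcd(v1,v2,v3) = 1, and let F1(z) = z^{v1}+z^{v2}+z^{v3}, F2(z) = z^{v1+v2}+z^{v1+v3}+z^{v2+v3}. If x, y ∈ ℂ* satisfy |x| > 1, F1(x) = F1(y), and F2(x) = F2(y), then x = y. -/

import Mathlib

lemma sq_le_aux (a b s t : ℝ) (ha : a ≠ 0) (hb : b^2 ≤ a^2) (h : a*s = b*t) :
    s^2 ≤ t^2 := by
  have ha2 : 0 < a^2 := by positivity
  have h2 : a^2*s^2 = b^2*t^2 := by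
    have h' : (a*s)^2 = (b*t)^2 := by rw [h]
    linear_combination h'
  have h3 : 0 ≤ a^2*(t^2-s^2) := by
    nlinarith [mul_nonneg (sub_nonneg.mpr hb) (sq_nonneg t)]
  nlinarith [h3, ha2]

theorem stmt_6 (v₁ v₂ v₃ : ℤ) (hsum : v₁ + v₂ + v₃ = 0)
    (hnz : v₁ * v₂ * v₃ ≠ 0)
    (hgcd : Int.gcd v₁ (Int.gcd v₂ v₃) = 1)
    (x y : ℂ) (hx : x ≠ 0) (hy : y ≠ 0)
    (habs : 1 < ‖x‖)
    (hF1 : x ^ v₁ + x ^ v₂ + x ^ v₃ = y ^ v₁ + y ^ v₂ + y ^ v₃)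
    (hF2 : x ^ (v₁ + v₂) + x ^ (v₁ + v₃) + x ^ (v₂ + v₃)
         = y ^ (v₁ + v₂) + y ^ (v₁ + v₃) + y ^ (v₂ + v₃)) :
    x = y := by
  have hv1 : v₁ ≠ 0 := fun h => hnz (by simp [h])
  have hv2 : v₂ ≠ 0 := fun h => hnz (by simp [h])
  have hv3 : v₃ ≠ 0 := fun h => hnz (by simp [h])
  have hxp : x ^ v₁ * x ^ v₂ * x ^ v₃ = 1 := by
    rw [← zpow_add₀ hx, ← zpow_add₀ hx, hsum, zpow_zero]
  have hyp : y ^ v₁ * y ^ v₂ * y ^ v₃ = 1 := by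
    rw [← zpow_add₀ hy, ← zpow_add₀ hy, hsum, zpow_zero]
  have factA : ∀ b : ℂ, b^3 - (x^v₁+x^v₂+x^v₃)*b^2
      + (x^(v₁+v₂)+x^(v₁+v₃)+x^(v₂+v₃))*b - 1
      = (b - x^v₁)*(b - x^v₂)*(b - x^v₃) := by
    intro b
    rw [zpow_add₀ hx, zpow_add₀ hx, zpow_add₀ hx]
    linear_combination hxp
  have factB : ∀ b : ℂ, b^3 - (y^v₁+y^v₂+y^v₃)*b^2
      + (y^(v₁+v₂)+y^(v₁+v₃)+y^(v₂+v₃))*b - 1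
      = (b - y^v₁)*(b - y^v₂)*(b - y^v₃) := by
    intro b
    rw [zpow_add₀ hy, zpow_add₀ hy, zpow_add₀ hy]
    linear_combination hyp
  have rootA : ∀ a : ℤ, (a = v₁ ∨ a = v₂ ∨ a = v₃) →
      (y^a - x^v₁)*(y^a - x^v₂)*(y^a - x^v₃) = 0 := by
    intro a ha
    rw [← factA (y^a), hF1, hF2, factB (y^a)]
    rcases ha with rfl|rfl|rfl <;> ring
  have hA1 : y^v₁ = x^v₁ ∨ y^v₁ = x^v₂ ∨ y^v₁ = x^v₃ := by
    simpa [mul_eq_zero, sub_eq_zero, or_assoc] using rootA v₁ (Or.inl rfl)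
  have hA2 : y^v₂ = x^v₁ ∨ y^v₂ = x^v₂ ∨ y^v₂ = x^v₃ := by
    simpa [mul_eq_zero, sub_eq_zero, or_assoc] using rootA v₂ (Or.inr (Or.inl rfl))
  have hA3 : y^v₃ = x^v₁ ∨ y^v₃ = x^v₂ ∨ y^v₃ = x^v₃ := by
    simpa [mul_eq_zero, sub_eq_zero, or_assoc] using rootA v₃ (Or.inr (Or.inr rfl))
  have rootB : ∀ a : ℤ, (a = v₁ ∨ a = v₂ ∨ a = v₃) →
      (x^a - y^v₁)*(x^a - y^v₂)*(x^a - y^v₃) = 0 := by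
    intro a ha
    rw [← factB (x^a), ← hF1, ← hF2, factA (x^a)]
    rcases ha with rfl|rfl|rfl <;> ring
  have hB1 : x^v₁ = y^v₁ ∨ x^v₁ = y^v₂ ∨ x^v₁ = y^v₃ := by
    simpa [mul_eq_zero, sub_eq_zero, or_assoc] using rootB v₁ (Or.inl rfl)
  have hB2 : x^v₂ = y^v₁ ∨ x^v₂ = y^v₂ ∨ x^v₂ = y^v₃ := by
    simpa [mul_eq_zero, sub_eq_zero, or_assoc] using rootB v₂ (Or.inr (Or.inl rfl))
  have hB3 : x^v₃ = y^v₁ ∨ x^v₃ = y^v₂ ∨ x^v₃ = y^v₃ := by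
    simpa [mul_eq_zero, sub_eq_zero, or_assoc] using rootB v₃ (Or.inr (Or.inr rfl))
  set t := Real.log ‖x‖ with ht_def
  set s := Real.log ‖y‖ with hs_def
  have ht : 0 < t := Real.log_pos habs
  have logA : ∀ a b : ℤ, y^a = x^b → (a:ℝ)*s = (b:ℝ)*t := by
    intro a b h
    have h2 := congrArg norm h
    rw [norm_zpow, norm_zpow] at h2
    have h3 := congrArg Real.log h2
    rwa [Real.log_zpow, Real.log_zpow] at h3
  have logB : ∀ a b : ℤ, x^a = y^b → (a:ℝ)*t = (b:ℝ)*s := by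
    intro a b h
    have h2 := congrArg norm h
    rw [norm_zpow, norm_zpow] at h2
    have h3 := congrArg Real.log h2
    rwa [Real.log_zpow, Real.log_zpow] at h3
  have la1 : (v₁:ℝ)*s = (v₁:ℝ)*t ∨ (v₁:ℝ)*s = (v₂:ℝ)*t ∨ (v₁:ℝ)*s = (v₃:ℝ)*t := by
    rcases hA1 with h|h|h
    exacts [Or.inl (logA _ _ h), Or.inr (Or.inl (logA _ _ h)), Or.inr (Or.inr (logA _ _ h))]
  have la2 : (v₂:ℝ)*s = (v₁:ℝ)*t ∨ (v₂:ℝ)*s = (v₂:ℝ)*t ∨ (v₂:ℝ)*s = (v₃:ℝ)*t := by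
    rcases hA2 with h|h|h
    exacts [Or.inl (logA _ _ h), Or.inr (Or.inl (logA _ _ h)), Or.inr (Or.inr (logA _ _ h))]
  have la3 : (v₃:ℝ)*s = (v₁:ℝ)*t ∨ (v₃:ℝ)*s = (v₂:ℝ)*t ∨ (v₃:ℝ)*s = (v₃:ℝ)*t := by
    rcases hA3 with h|h|h
    exacts [Or.inl (logA _ _ h), Or.inr (Or.inl (logA _ _ h)), Or.inr (Or.inr (logA _ _ h))]
  have lb1 : (v₁:ℝ)*t = (v₁:ℝ)*s ∨ (v₁:ℝ)*t = (v₂:ℝ)*s ∨ (v₁:ℝ)*t = (v₃:ℝ)*s := by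
    rcases hB1 with h|h|h
    exacts [Or.inl (logB _ _ h), Or.inr (Or.inl (logB _ _ h)), Or.inr (Or.inr (logB _ _ h))]
  have lb2 : (v₂:ℝ)*t = (v₁:ℝ)*s ∨ (v₂:ℝ)*t = (v₂:ℝ)*s ∨ (v₂:ℝ)*t = (v₃:ℝ)*s := by
    rcases hB2 with h|h|h
    exacts [Or.inl (logB _ _ h), Or.inr (Or.inl (logB _ _ h)), Or.inr (Or.inr (logB _ _ h))]
  have lb3 : (v₃:ℝ)*t = (v₁:ℝ)*s ∨ (v₃:ℝ)*t = (v₂:ℝ)*s ∨ (v₃:ℝ)*t = (v₃:ℝ)*s := by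
    rcases hB3 with h|h|h
    exacts [Or.inl (logB _ _ h), Or.inr (Or.inl (logB _ _ h)), Or.inr (Or.inr (logB _ _ h))]
  have hv1r : (v₁:ℝ) ≠ 0 := Int.cast_ne_zero.mpr hv1
  have hv2r : (v₂:ℝ) ≠ 0 := Int.cast_ne_zero.mpr hv2
  have hv3r : (v₃:ℝ) ≠ 0 := Int.cast_ne_zero.mpr hv3
  have hs2 : s^2 ≤ t^2 := by
    rcases le_total ((v₁:ℝ)^2) ((v₂:ℝ)^2) with h12 | h12
    · rcases le_total ((v₂:ℝ)^2) ((v₃:ℝ)^2) with h23 | h23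
      · rcases la3 with h|h|h
        · exact sq_le_aux _ _ _ _ hv3r (by linarith) h
        · exact sq_le_aux _ _ _ _ hv3r (by linarith) h
        · exact sq_le_aux _ _ _ _ hv3r le_rfl h
      · rcases la2 with h|h|h
        · exact sq_le_aux _ _ _ _ hv2r (by linarith) h
        · exact sq_le_aux _ _ _ _ hv2r le_rfl h
        · exact sq_le_aux _ _ _ _ hv2r (by linarith) h
    · rcases le_total ((v₁:ℝ)^2) ((v₃:ℝ)^2) with h13 | h13
      · rcases la3 with h|h|h
        · exact sq_le_aux _ _ _ _ hv3r (by linarith) h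
        · exact sq_le_aux _ _ _ _ hv3r (by linarith) h
        · exact sq_le_aux _ _ _ _ hv3r le_rfl h
      · rcases la1 with h|h|h
        · exact sq_le_aux _ _ _ _ hv1r le_rfl h
        · exact sq_le_aux _ _ _ _ hv1r (by linarith) h
        · exact sq_le_aux _ _ _ _ hv1r (by linarith) h
  have ht2 : t^2 ≤ s^2 := by
    rcases le_total ((v₁:ℝ)^2) ((v₂:ℝ)^2) with h12 | h12
    · rcases le_total ((v₂:ℝ)^2) ((v₃:ℝ)^2) with h23 | h23
      · rcases lb3 with h|h|h
        · exact sq_le_aux _ _ _ _ hv3r (by linarith) h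
        · exact sq_le_aux _ _ _ _ hv3r (by linarith) h
        · exact sq_le_aux _ _ _ _ hv3r le_rfl h
      · rcases lb2 with h|h|h
        · exact sq_le_aux _ _ _ _ hv2r (by linarith) h
        · exact sq_le_aux _ _ _ _ hv2r le_rfl h
        · exact sq_le_aux _ _ _ _ hv2r (by linarith) h
    · rcases le_total ((v₁:ℝ)^2) ((v₃:ℝ)^2) with h13 | h13
      · rcases lb3 with h|h|h
        · exact sq_le_aux _ _ _ _ hv3r (by linarith) h
        · exact sq_le_aux _ _ _ _ hv3r (by linarith) h
        · exact sq_le_aux _ _ _ _ hv3r le_rfl h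
      · rcases lb1 with h|h|h
        · exact sq_le_aux _ _ _ _ hv1r le_rfl h
        · exact sq_le_aux _ _ _ _ hv1r (by linarith) h
        · exact sq_le_aux _ _ _ _ hv1r (by linarith) h
  have hst : s = t ∨ s = -t := by
    have h0 : (s-t)*(s+t) = 0 := by nlinarith
    rcases mul_eq_zero.mp h0 with h|h
    · exact Or.inl (by linarith)
    · exact Or.inr (by linarith)
  rcases hst with hst | hst
  · -- s = t : matching exponents
    have eqexp : ∀ a b : ℤ, (a:ℝ)*s = (b:ℝ)*t → b = a := by
      intro a b h
      rw [hst] at h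
      exact_mod_cast (mul_right_cancel₀ (ne_of_gt ht) h).symm
    have e1 : y^v₁ = x^v₁ := by
      rcases hA1 with h|h|h
      · exact h
      · rwa [eqexp _ _ (logA _ _ h)] at h
      · rwa [eqexp _ _ (logA _ _ h)] at h
    have e2 : y^v₂ = x^v₂ := by
      rcases hA2 with h|h|h
      · rwa [eqexp _ _ (logA _ _ h)] at h
      · exact h
      · rwa [eqexp _ _ (logA _ _ h)] at h
    have e3 : y^v₃ = x^v₃ := by
      rcases hA3 with h|h|h
      · rwa [eqexp _ _ (logA _ _ h)] at h
      · rwa [eqexp _ _ (logA _ _ h)] at h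
      · exact h
    -- Bezout
    have hg2 : (Int.gcd v₂ v₃ : ℤ) = v₂ * Int.gcdA v₂ v₃ + v₃ * Int.gcdB v₂ v₃ :=
      Int.gcd_eq_gcd_ab v₂ v₃
    have hg1 : ((Int.gcd v₁ (Int.gcd v₂ v₃) : ℤ))
        = v₁ * Int.gcdA v₁ (Int.gcd v₂ v₃) + (Int.gcd v₂ v₃ : ℤ) * Int.gcdB v₁ (Int.gcd v₂ v₃) :=
      Int.gcd_eq_gcd_ab v₁ (Int.gcd v₂ v₃)
    have bez : ∃ a b c : ℤ, v₁*a + v₂*b + v₃*c = 1 := by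
      refine ⟨Int.gcdA v₁ (Int.gcd v₂ v₃),
        Int.gcdA v₂ v₃ * Int.gcdB v₁ (Int.gcd v₂ v₃),
        Int.gcdB v₂ v₃ * Int.gcdB v₁ (Int.gcd v₂ v₃), ?_⟩
      have h1 : ((Int.gcd v₁ (Int.gcd v₂ v₃) : ℕ) : ℤ) = 1 := by exact_mod_cast hgcd
      linear_combination h1 - hg1 - Int.gcdB v₁ (Int.gcd v₂ v₃) * hg2
    obtain ⟨a, b, c, hbez⟩ := bez
    have rep : ∀ z : ℂ, z ≠ 0 → z = (z^v₁)^a * (z^v₂)^b * (z^v₃)^c := by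
      intro z hz
      rw [← zpow_mul, ← zpow_mul, ← zpow_mul, ← zpow_add₀ hz, ← zpow_add₀ hz, hbez, zpow_one]
    calc x = (x^v₁)^a * (x^v₂)^b * (x^v₃)^c := rep x hx
      _ = (y^v₁)^a * (y^v₂)^b * (y^v₃)^c := by rw [e1, e2, e3]
      _ = y := (rep y hy).symm
  · -- s = -t : contradiction
    exfalso
    have neg : ∀ a b : ℤ, (a:ℝ)*s = (b:ℝ)*t → b = -a := by
      intro a b h
      rw [hst] at h
      have h' : ((-a : ℤ):ℝ)*t = (b:ℝ)*t := by push_cast; linarith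
      exact_mod_cast (mul_right_cancel₀ (ne_of_gt ht) h').symm
    have c1 : v₁ = -v₁ ∨ v₂ = -v₁ ∨ v₃ = -v₁ := by
      rcases la1 with h|h|h
      exacts [Or.inl (neg _ _ h), Or.inr (Or.inl (neg _ _ h)), Or.inr (Or.inr (neg _ _ h))]
    have c2 : v₁ = -v₂ ∨ v₂ = -v₂ ∨ v₃ = -v₂ := by
      rcases la2 with h|h|h
      exacts [Or.inl (neg _ _ h), Or.inr (Or.inl (neg _ _ h)), Or.inr (Or.inr (neg _ _ h))]
    have c3 : v₁ = -v₃ ∨ v₂ = -v₃ ∨ v₃ = -v₃ := by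
      rcases la3 with h|h|h
      exacts [Or.inl (neg _ _ h), Or.inr (Or.inl (neg _ _ h)), Or.inr (Or.inr (neg _ _ h))]
    rcases c1 with h1|h1|h1 <;> rcases c2 with h2|h2|h2 <;> rcases c3 with h3|h3|h3 <;> omega
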